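/- If X is a copositive p×p matrix and there exists a vector t with all entries strictly positive such that t^T X t = 0, then X is positive semidefinite. -/

import Mathlib

open Matrix

lemma symm_dot_aux {p : ℕ} {X : Matrix (Fin p) (Fin p) ℝ} (hX : X.IsSymm)
    (a b : Fin p → ℝ) : a ⬝ᵥ X.mulVec b = b ⬝ᵥ X.mulVec a := by
  rw [dotProduct_comm]
  conv_lhs => rw [← hX.eq, mulVec_transpose]
  rw [← Matrix.dotProduct_mulVec]

theorem stmt16 (p : ℕ) (X : Matrix (Fin p) (Fin p) ℝ)
    (hX : X.IsSymm)
    (hcop : ∀ s : Fin p → ℝ, (∀ k, 0 ≤ s k) → 0 ≤ s ⬝ᵥ X.mulVec s)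
    (t : Fin p → ℝ) (ht : ∀ k, 0 < t k) (hzero : t ⬝ᵥ X.mulVec t = 0) :
    X.PosSemidef := by
  rw [posSemidef_iff_dotProduct_mulVec]
  constructor
  · ext i j
    simpa using congrFun (congrFun hX i) j
  · intro s
    simp only [RCLike.re_to_real, star_trivial]
    -- find δ > 0 with δ * |s k| ≤ t k for all k
    have hδ : ∃ δ : ℝ, 0 < δ ∧ ∀ k, δ * |s k| ≤ t k := by
      by_cases h : Nonempty (Fin p)
      · obtain ⟨k0⟩ := h
        refine ⟨Finset.univ.inf' ⟨k0, Finset.mem_univ k0⟩ (fun k => t k / (1 + |s k|)),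
          ?_, ?_⟩
        · apply Finset.lt_inf'_iff _ |>.mpr
          intro k _
          have := ht k
          positivity
        · intro k
          have h1 : Finset.univ.inf' ⟨k0, Finset.mem_univ k0⟩ (fun k => t k / (1 + |s k|))
              ≤ t k / (1 + |s k|) := Finset.inf'_le _ (Finset.mem_univ k)
          have h2 : (0:ℝ) < 1 + |s k| := by positivity
          have h3 : t k / (1 + |s k|) * |s k| ≤ t k := by
            rw [div_mul_eq_mul_div, div_le_iff₀ h2]
            have := (ht k).le
            nlinarith [abs_nonneg (s k)]
          calc _ ≤ t k / (1 + |s k|) * |s k| := by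
                apply mul_le_mul_of_nonneg_right h1 (abs_nonneg _)
            _ ≤ t k := h3
      · exact ⟨1, one_pos, fun k => absurd ⟨k⟩ h⟩
    obtain ⟨δ, hδpos, hδle⟩ := hδ
    have hplus : 0 ≤ (t + δ • s) ⬝ᵥ X.mulVec (t + δ • s) := by
      apply hcop
      intro k
      have := hδle k
      have := neg_abs_le (s k)
      simp only [Pi.add_apply, Pi.smul_apply, smul_eq_mul]
      nlinarith
    have hminus : 0 ≤ (t + (-δ) • s) ⬝ᵥ X.mulVec (t + (-δ) • s) := by
      apply hcop
      intro k
      have := hδle k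
      have := le_abs_self (s k)
      simp only [Pi.add_apply, Pi.smul_apply, smul_eq_mul]
      nlinarith
    have hsym := symm_dot_aux hX t s
    simp only [mulVec_add, mulVec_smul, dotProduct_add, add_dotProduct,
      smul_dotProduct, dotProduct_smul, smul_eq_mul, hzero, hsym] at hplus hminus
    nlinarith [mul_pos hδpos hδpos, hplus, hminus]
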